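/- Let f : ℕ⁺ → ℝ satisfy f(1) = 1, f(ℓ) ≥ 1 for all ℓ, and for all ℓ ≥ 2, Σ_{i=1}^{ℓ-1} f(ℓ)/(f(i)f(ℓ-i)) ≤ 4. Let T be a finite tree with ℓ vertices, let P be a path in T with edges h₁,…,h_k, and let c assign a nonnegative length to each edge. For an edge e of T, let ℓ_e and ℓ_e' be the numbers of vertices in the two components of T minus e. Then there exists an edge h on P such that c(P) ≤ 4·c(h)·f(ℓ_h)·f(ℓ_h')/f(ℓ), where c(P) is the total length of P. -/

import Mathlib

open SimpleGraph

namespace Stmt5Aux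

variable {V : Type*} [Fintype V] [DecidableEq V] {G : SimpleGraph V}

/-- The component of `x` after deleting edge `e`. -/
def S (G : SimpleGraph V) (x : V) (e : Sym2 V) : Set V :=
  {w | (G.deleteEdges {e}).Reachable x w}

lemma mem_S_self (G : SimpleGraph V) (x : V) (e : Sym2 V) : x ∈ S G x e :=
  Reachable.refl x

lemma vert_mem_support {x w y : V} (p : G.Walk x w) {e : Sym2 V}
    (he : e ∈ p.edges) (hy : y ∈ e) : y ∈ p.support := by
  induction e with
  | h t u =>
    rcases Sym2.mem_iff.mp hy with rfl | rfl
    · exact p.fst_mem_support_of_mem_edges he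
    · exact p.snd_mem_support_of_mem_edges he

lemma mem_S_of_edges_avoid {x w : V} (p : G.Walk x w) {e : Sym2 V}
    (he : e ∉ p.edges) : w ∈ S G x e := by
  refine ⟨p.toDeleteEdges {e} ?_⟩
  intro e' h1 h2
  rw [Set.mem_singleton_iff] at h2
  subst h2
  exact he h1

lemma mem_S_of_avoid {x w y : V} (p : G.Walk x w) (hy : y ∉ p.support)
    {e : Sym2 V} (hye : y ∈ e) : w ∈ S G x e :=
  mem_S_of_edges_avoid p (fun h => hy (vert_mem_support p h hye))

lemma exists_path_avoid (hG : G.IsTree) {x y w : V} (hxy : G.Adj x y)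
    (h : w ∈ S G x s(x, y)) : ∃ p : G.Walk x w, p.IsPath ∧ y ∉ p.support := by
  obtain ⟨q0⟩ := h
  obtain ⟨q, hq⟩ := q0.toPath
  have hqe : s(x, y) ∉ q.edges := by
    intro hh
    have := q.edges_subset_edgeSet hh
    rw [edgeSet_deleteEdges] at this
    exact this.2 rfl
  have hsub : ∀ e ∈ q.edges, e ∈ G.edgeSet := by
    intro e he
    have := q.edges_subset_edgeSet he
    rw [edgeSet_deleteEdges] at this
    exact this.1
  set p : G.Walk x w := q.transfer G hsub with hpdef
  have hpe : p.edges = q.edges := q.edges_transfer hsub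
  have hps : p.support = q.support := q.support_transfer hsub
  have hp : p.IsPath := by
    rw [Walk.isPath_def, hps]
    exact hq.2
  refine ⟨p, hp, fun hy => ?_⟩
  have ht : (p.takeUntil y hy).IsPath := hp.takeUntil hy
  have hone : (Walk.cons hxy Walk.nil : G.Walk x y).IsPath := by
    simp [Walk.cons_isPath_iff, hxy.ne]
  obtain ⟨r, -, hrun⟩ := hG.existsUnique_path x y
  have heq : (Walk.cons hxy Walk.nil : G.Walk x y) = p.takeUntil y hy := by
    rw [hrun _ hone, hrun _ ht]
  have hmem : s(x, y) ∈ (p.takeUntil y hy).edges := by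
    rw [← heq]; simp
  have : s(x, y) ∈ p.edges := p.edges_takeUntil_subset hy hmem
  rw [hpe] at this
  exact hqe this

lemma not_mem_S (hG : G.IsTree) {x y : V} (hxy : G.Adj x y) : y ∉ S G x s(x, y) := by
  intro h
  obtain ⟨p, hp, hy⟩ := exists_path_avoid hG hxy h
  exact hy p.end_mem_support

lemma mem_S_or (hG : G.IsTree) {x y : V} (hxy : G.Adj x y) (w : V) :
    w ∈ S G x s(x, y) ∨ w ∈ S G y s(x, y) := by
  obtain ⟨p0⟩ := hG.isConnected.preconnected x w
  obtain ⟨p, hp⟩ := p0.toPath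
  clear p0
  cases p with
  | nil => exact Or.inl (mem_S_self G x _)
  | cons h q =>
    rename_i m
    have hq : q.IsPath := ((Walk.cons_isPath_iff h q).mp hp).1
    have hx : x ∉ q.support := ((Walk.cons_isPath_iff h q).mp hp).2
    by_cases hm : m = y
    · cases hm
      exact Or.inr (mem_S_of_avoid q hx (Sym2.mem_mk_left _ _))
    · refine Or.inl (mem_S_of_edges_avoid (Walk.cons h q) ?_)
      simp only [Walk.edges_cons, List.mem_cons]
      rintro (heq | hmem)
      · rw [Sym2.eq_iff] at heq
        rcases heq with ⟨-, rfl⟩ | ⟨rfl, -⟩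
        · exact hm rfl
        · exact G.irrefl h
      · exact hx (vert_mem_support q hmem (Sym2.mem_mk_left x y))

lemma S_compl (hG : G.IsTree) {x y : V} (hxy : G.Adj x y) :
    S G y s(x, y) = (S G x s(x, y))ᶜ := by
  ext w
  constructor
  · intro hwy hwx
    have : (G.deleteEdges {s(x, y)}).Reachable x y :=
      Reachable.trans hwx (Reachable.symm hwy)
    exact not_mem_S hG hxy this
  · intro hwx
    exact (mem_S_or hG hxy w).resolve_left hwx

lemma S_ncard_mem (hG : G.IsTree) {x y : V} (hxy : G.Adj x y) :
    (S G x s(x, y)).ncard ∈ Finset.Ico 1 (Fintype.card V) := by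
  rw [Finset.mem_Ico]
  constructor
  · exact (Set.ncard_pos (Set.toFinite _)).mpr ⟨x, mem_S_self G x _⟩
  · have hss : S G x s(x, y) ⊂ Set.univ := by
      rw [Set.ssubset_univ_iff]
      intro hu
      exact not_mem_S hG hxy (hu ▸ Set.mem_univ y)
    have := Set.ncard_lt_ncard hss (Set.toFinite _)
    rwa [Set.ncard_univ, Nat.card_eq_fintype_card] at this

lemma S_ncard_compl (hG : G.IsTree) {x y : V} (hxy : G.Adj x y) :
    (S G y s(x, y)).ncard = Fintype.card V - (S G x s(x, y)).ncard := by
  rw [S_compl hG hxy]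
  have h := Set.ncard_add_ncard_compl (S G x s(x, y)) (Set.toFinite _) (Set.toFinite _)
  rw [Nat.card_eq_fintype_card] at h
  omega

lemma S_ssubset (hG : G.IsTree) {x y z : V} (hxy : G.Adj x y) (hyz : G.Adj y z)
    (hxz : x ≠ z) : S G x s(x, y) ⊂ S G y s(y, z) := by
  rw [Set.ssubset_def]
  constructor
  · intro w hw
    obtain ⟨p, hp, hyp⟩ := exists_path_avoid hG hxy hw
    have he' : s(y, z) ∉ p.edges :=
      fun h => hyp (vert_mem_support p h (Sym2.mem_mk_left y z))
    have hne : s(y, z) ∉ (Walk.cons hxy.symm p).edges := by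
      simp only [Walk.edges_cons, List.mem_cons]
      rintro (heq | hmem)
      · rw [Sym2.eq_iff] at heq
        rcases heq with ⟨-, rfl⟩ | ⟨rfl, -⟩
        · exact hxz rfl
        · exact G.irrefl hxy
      · exact he' hmem
    exact mem_S_of_edges_avoid _ hne
  · intro hsub
    exact not_mem_S hG hxy (hsub (mem_S_self G y _))

lemma chain_S (hG : G.IsTree) {u v : V} (p : G.Walk u v) :
    p.IsPath →
      List.Chain' (fun d d' : G.Dart => S G d.fst d.edge ⊂ S G d'.fst d'.edge) p.darts := by
  induction p with
  | nil => exact fun _ => List.isChain_nil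
  | cons h q ih =>
    intro hp
    cases q with
    | nil => exact List.isChain_singleton _
    | cons h' r =>
      have hih := ih hp.of_cons
      rw [Walk.darts_cons, Walk.darts_cons, List.Chain', List.isChain_cons_cons]
      refine ⟨S_ssubset hG h h' ?_, by rwa [Walk.darts_cons] at hih⟩
      have hx := ((Walk.cons_isPath_iff h _).mp hp).2
      intro hEq
      subst hEq
      apply hx
      rw [Walk.support_cons]
      exact List.mem_cons_of_mem _ r.start_mem_support

lemma list_sum_lt {α : Type*} {l : List α} (hl : l ≠ []) {F g : α → ℝ}
    (h : ∀ a ∈ l, F a < g a) : (l.map F).sum < (l.map g).sum := by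
  cases l with
  | nil => exact absurd rfl hl
  | cons a t =>
    simp only [List.map_cons, List.sum_cons]
    exact add_lt_add_of_lt_of_le (h a (List.Mem.head _))
      (List.sum_le_sum fun b hb => (h b (List.Mem.tail _ hb)).le)

end Stmt5Aux

theorem stmt_5 (V : Type*) [Fintype V] [DecidableEq V]
    (G : SimpleGraph V) (hG : G.IsTree)
    (c : Sym2 V → ℝ) (hc : ∀ e, 0 ≤ c e)
    (f : ℕ → ℝ) (hf1 : f 1 = 1) (hfge : ∀ ℓ : ℕ, 1 ≤ ℓ → 1 ≤ f ℓ)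
    (hfsum : ∀ ℓ : ℕ, 2 ≤ ℓ → ∑ i ∈ Finset.Ico 1 ℓ, f ℓ / (f i * f (ℓ - i)) ≤ 4)
    (u v : V) (P : G.Walk u v) (hP : P.IsPath) (hne : P.edges ≠ []) :
    ∃ a b : V, G.Adj a b ∧ s(a, b) ∈ P.edges ∧
      (P.edges.map c).sum ≤
        4 * c s(a, b)
          * f ({w | (G.deleteEdges {s(a, b)}).Reachable a w}.ncard)
          * f ({w | (G.deleteEdges {s(a, b)}).Reachable b w}.ncard)
          / f (Fintype.card V) := by
  classical
  by_contra hcon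
  push_neg at hcon
  set ℓ := Fintype.card V with hℓdef
  set cP := (P.edges.map c).sum with hcPdef
  have hdne : P.darts ≠ [] := by
    intro h
    apply hne
    show (P.darts.map SimpleGraph.Dart.edge) = []
    rw [h]; rfl
  obtain ⟨d0, hd0⟩ := List.exists_mem_of_ne_nil _ hdne
  have hnt : Nontrivial V := ⟨d0.fst, d0.snd, d0.adj.ne⟩
  have hℓ2 : 2 ≤ ℓ := Fintype.one_lt_card
  set n : G.Dart → ℕ := fun d => (Stmt5Aux.S G d.fst d.edge).ncard with hndef
  have hnval : ∀ d : G.Dart, n d = (Stmt5Aux.S G d.fst d.edge).ncard := fun _ => rfl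
  have hedge : ∀ d : G.Dart, d.edge = s(d.fst, d.snd) := fun d => rfl
  have hmemIco : ∀ d ∈ P.darts, n d ∈ Finset.Ico 1 ℓ := by
    intro d _
    exact Stmt5Aux.S_ncard_mem hG d.adj
  set g : ℕ → ℝ := fun i => f ℓ / (f i * f (ℓ - i)) with hgdef
  have hgval : ∀ i, g i = f ℓ / (f i * f (ℓ - i)) := fun _ => rfl
  have hgpos : ∀ i ∈ Finset.Ico 1 ℓ, 0 ≤ g i := by
    intro i hi
    rw [Finset.mem_Ico] at hi
    have h1 : (1 : ℝ) ≤ f i := hfge i hi.1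
    have h2 : (1 : ℝ) ≤ f (ℓ - i) := hfge _ (by omega)
    have h3 : (1 : ℝ) ≤ f ℓ := hfge ℓ (by omega)
    rw [hgval]
    have : (0:ℝ) < f i * f (ℓ - i) := by nlinarith
    positivity
  have hpoint : ∀ d ∈ P.darts, c d.edge < cP / 4 * g (n d) := by
    intro d hd
    have hmem : s(d.fst, d.snd) ∈ P.edges := by
      rw [← hedge d]
      exact List.mem_map_of_mem hd
    have hnfst : ({w | (G.deleteEdges {s(d.fst, d.snd)}).Reachable d.fst w}).ncard = n d := by
      rw [hnval]; rfl
    have hcomp : ({w | (G.deleteEdges {s(d.fst, d.snd)}).Reachable d.snd w}).ncard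
        = ℓ - n d := by
      rw [hnval, hℓdef]
      exact Stmt5Aux.S_ncard_compl hG d.adj
    have hb := hcon d.fst d.snd d.adj hmem
    rw [hnfst, hcomp] at hb
    have hIco := hmemIco d hd
    rw [Finset.mem_Ico] at hIco
    have hA : (1 : ℝ) ≤ f (n d) := hfge _ hIco.1
    have hB : (1 : ℝ) ≤ f (ℓ - n d) := hfge _ (by omega)
    have hF : (1 : ℝ) ≤ f ℓ := hfge ℓ (by omega)
    have h1 : 4 * c d.edge * f (n d) * f (ℓ - n d) < cP * f ℓ := by
      rw [div_lt_iff₀ (by linarith)] at hb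
      rw [hedge d]
      exact hb
    have h2 : c d.edge < cP * f ℓ / (4 * (f (n d) * f (ℓ - n d))) := by
      rw [lt_div_iff₀ (by nlinarith)]
      nlinarith
    have h3 : cP / 4 * g (n d) = cP * f ℓ / (4 * (f (n d) * f (ℓ - n d))) := by
      rw [hgval, div_mul_div_comm]
    rw [h3]
    exact h2
  have hcP0 : 0 < cP := by
    have h1 := hpoint d0 hd0
    have hg0 := hgpos (n d0) (hmemIco d0 hd0)
    nlinarith [hc d0.edge]
  have hchain := Stmt5Aux.chain_S hG P hP
  have hlt : List.Chain' (· < ·) (P.darts.map n) := by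
    rw [List.Chain', List.isChain_map]
    exact (show List.IsChain _ _ from hchain).imp fun _ _ hss => Set.ncard_lt_ncard hss (Set.toFinite _)
  have hpw : (P.darts.map n).Pairwise (· < ·) := List.isChain_iff_pairwise.mp hlt
  have hnodup : (P.darts.map n).Nodup := hpw.imp fun h => Nat.ne_of_lt h
  have hsum4 : ((P.darts.map n).map g).sum ≤ 4 := by
    have h1 : ((P.darts.map n).map g).sum = ∑ i ∈ (P.darts.map n).toFinset, g i :=
      (List.sum_toFinset g hnodup).symm
    rw [h1]
    calc ∑ i ∈ (P.darts.map n).toFinset, g i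
        ≤ ∑ i ∈ Finset.Ico 1 ℓ, g i := by
          apply Finset.sum_le_sum_of_subset_of_nonneg
          · intro i hi
            rw [List.mem_toFinset] at hi
            obtain ⟨d, hd, rfl⟩ := List.mem_map.mp hi
            exact hmemIco d hd
          · intro i hi _
            exact hgpos i hi
      _ ≤ 4 := by
          calc ∑ i ∈ Finset.Ico 1 ℓ, g i
              = ∑ i ∈ Finset.Ico 1 ℓ, f ℓ / (f i * f (ℓ - i)) := by
                apply Finset.sum_congr rfl
                intro i _
                rw [hgval]
            _ ≤ 4 := hfsum ℓ hℓ2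
  have hedges : P.edges.map c = P.darts.map (fun d => c d.edge) := by
    show (P.darts.map SimpleGraph.Dart.edge).map c = _
    rw [List.map_map]
    rfl
  have hsum_eq : cP = (P.darts.map (fun d => c d.edge)).sum := by
    rw [hcPdef, hedges]
  have hstrict : cP < (P.darts.map (fun d => cP / 4 * g (n d))).sum := by
    conv_lhs => rw [hsum_eq]
    exact Stmt5Aux.list_sum_lt hdne hpoint
  have hfactor : (P.darts.map (fun d => cP / 4 * g (n d))).sum
      = cP / 4 * ((P.darts.map n).map g).sum := by
    rw [List.map_map]
    exact List.sum_map_mul_left _ _ _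
  rw [hfactor] at hstrict
  have hle : cP / 4 * ((P.darts.map n).map g).sum ≤ cP / 4 * 4 :=
    mul_le_mul_of_nonneg_left hsum4 (by linarith)
  have hcc : cP < cP := by
    calc cP < cP / 4 * ((P.darts.map n).map g).sum := hstrict
      _ ≤ cP / 4 * 4 := hle
      _ = cP := by ring
  exact lt_irrefl _ hcc
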